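/- For every even integer n ≥ 2, the Sombor characteristic polynomial of the order super commuting graph Δ^o(Q_{4n}) of the generalized quaternion group Q_{4n} equals (x + (4n−1)·√2)^{4n−1} · (x − (4n−1)²·√2); equivalently, the Sombor spectrum of Δ^o(Q_{4n}) consists of −(4n−1)·√2 with multiplicity 4n−1 and (4n−1)²·√2 with multiplicity 1. -/

import Mathlib

open Polynomial
open scoped Classical

/-- Degree of a vertex. -/
noncomputable def sdeg {V : Type*} (G : SimpleGraph V) (v : V) : ℕ := {u | G.Adj v u}.ncard

/-- Sombor matrix of a graph. -/
noncomputable def somborMatrix {V : Type*} (G : SimpleGraph V) : Matrix V V ℝ :=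
  Matrix.of fun u v =>
    if G.Adj u v then Real.sqrt ((sdeg G u : ℝ) ^ 2 + (sdeg G v : ℝ) ^ 2) else 0

/-- Sombor characteristic polynomial det(x·I − S(Γ)). -/
noncomputable def somborCharpoly {V : Type*} [Fintype V] [DecidableEq V] (G : SimpleGraph V) :
    Polynomial ℝ :=
  (somborMatrix G).charpoly

noncomputable def rt2 : ℝ := Real.sqrt 2

/-- The `R`-super `Γ` graph. -/
def superGraph {V : Type*} (A : SimpleGraph V) (r : V → V → Prop) (hr : Equivalence r) :
    SimpleGraph V where
  Adj x y := x ≠ y ∧ (r x y ∨ ∃ x' y', r x x' ∧ r y y' ∧ A.Adj x' y')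
  symm := ⟨by
    rintro x y ⟨hxy, h | ⟨x', y', hx, hy, hadj⟩⟩
    · exact ⟨hxy.symm, Or.inl (hr.symm h)⟩
    · exact ⟨hxy.symm, Or.inr ⟨y', x', hy, hx, hadj.symm⟩⟩⟩
  loopless := ⟨by rintro x ⟨h, -⟩; exact h rfl⟩

/-- Same-order relation. -/
def orderRel (G : Type*) [Monoid G] : G → G → Prop := fun x y => orderOf x = orderOf y

theorem orderRel_equivalence (G : Type*) [Monoid G] : Equivalence (orderRel G) :=
  ⟨fun _ => rfl, fun h => h.symm, fun h1 h2 => h1.trans h2⟩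

/-- Conjugacy relation. -/
def conjRel (G : Type*) [Group G] : G → G → Prop := fun x y => ∃ a : G, x = a * y * a⁻¹

theorem conjRel_equivalence (G : Type*) [Group G] : Equivalence (conjRel G) := by
  constructor
  · intro x; exact ⟨1, by simp⟩
  · rintro x y ⟨a, rfl⟩; exact ⟨a⁻¹, by group⟩
  · rintro x y z ⟨a, rfl⟩ ⟨b, rfl⟩; exact ⟨a * b, by group⟩

/-- Commuting graph. -/
def commutingGraph (G : Type*) [Group G] : SimpleGraph G where
  Adj x y := x ≠ y ∧ x * y = y * x
  symm := ⟨by rintro x y ⟨h, c⟩; exact ⟨h.symm, c.symm⟩⟩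
  loopless := ⟨by rintro x ⟨h, -⟩; exact h rfl⟩

/-- Power graph. -/
def powerGraph (G : Type*) [Group G] : SimpleGraph G where
  Adj x y := x ≠ y ∧ (x ∈ Subgroup.zpowers y ∨ y ∈ Subgroup.zpowers x)
  symm := ⟨by rintro x y ⟨h, c⟩; exact ⟨h.symm, c.symm⟩⟩
  loopless := ⟨by rintro x ⟨h, -⟩; exact h rfl⟩

/-- Enhanced power graph. -/
def enhancedPowerGraph (G : Type*) [Group G] : SimpleGraph G where
  Adj x y := x ≠ y ∧ ∃ z : G, x ∈ Subgroup.zpowers z ∧ y ∈ Subgroup.zpowers z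
  symm := ⟨by rintro x y ⟨h, z, hx, hy⟩; exact ⟨h.symm, z, hy, hx⟩⟩
  loopless := ⟨by rintro x ⟨h, -⟩; exact h rfl⟩

-- sdeg of top
lemma sdeg_top {V : Type*} [Fintype V] (v : V) :
    sdeg (⊤ : SimpleGraph V) v = Fintype.card V - 1 := by
  have h : {u | (⊤ : SimpleGraph V).Adj v u} = ({v}ᶜ : Set V) := by
    ext u; simp [SimpleGraph.top_adj, eq_comm]
  rw [sdeg, h, Set.ncard_eq_toFinset_card']
  simp [Set.toFinset_compl, Finset.card_compl]

-- charpoly of the "complete graph"-type matrix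
lemma charpoly_const_offdiag {V : Type*} [Fintype V] [DecidableEq V] [Nonempty V] (c : ℝ) :
    (Matrix.of (fun u v : V => if u = v then 0 else c)).charpoly
      = (X + C c) ^ (Fintype.card V - 1) *
        (X - C (((Fintype.card V - 1 : ℕ) : ℝ) * c)) := by
  set N := Fintype.card V with hN
  have hN1 : 1 ≤ N := Fintype.card_pos
  apply Polynomial.eq_of_infinite_eval_eq
  refine ((Set.finite_singleton (-c)).infinite_compl).mono ?_
  intro x hx
  have hxc : x + c ≠ 0 := by
    intro h; apply hx; simp only [Set.mem_singleton_iff]; linarith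
  simp only [Set.mem_setOf_eq]
  -- eval of charpoly
  have hev : Polynomial.eval x
      (Matrix.of (fun u v : V => if u = v then 0 else c)).charpoly
      = Matrix.det (Matrix.of (fun u v : V => if u = v then x else -c)) := by
    rw [Matrix.charpoly, ← Polynomial.coe_evalRingHom, RingHom.map_det]
    congr 1
    ext u v
    by_cases h : u = v
    · subst h
      simp [Matrix.charmatrix_apply_eq]
    · simp [Matrix.charmatrix_apply_ne _ _ _ h, h]
  rw [hev]
  have hfact : Matrix.of (fun u v : V => if u = v then x else -c)
      = (x + c) • (1 + Matrix.replicateCol Unit (fun _ => -c / (x + c)) * Matrix.replicateRow Unit (fun _ => (1:ℝ))) := by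
    ext u v
    by_cases h : u = v
    · subst h
      simp [Matrix.mul_apply, Matrix.one_apply]
      field_simp
      ring
    · simp [Matrix.mul_apply, Matrix.one_apply, h]
      field_simp
  rw [hfact, Matrix.det_smul, Matrix.det_one_add_replicateCol_mul_replicateRow]
  have hdot : dotProduct (fun _ : V => (1:ℝ)) (fun _ : V => -c / (x + c)) = N * (-c / (x+c)) := by
    simp [dotProduct, Finset.sum_const, hN]
  rw [hdot]
  have hpow : (x + c) ^ N = (x + c) ^ (N - 1) * (x + c) := by
    conv_lhs => rw [show N = (N - 1) + 1 by omega]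
    rw [pow_succ]
  have hcast : ((N - 1 : ℕ) : ℝ) = (N : ℝ) - 1 := by
    push_cast [Nat.cast_sub hN1]; ring
  rw [hpow, hcast]
  simp only [Polynomial.eval_mul, Polynomial.eval_pow, Polynomial.eval_add, Polynomial.eval_sub,
    Polynomial.eval_X, Polynomial.eval_C]
  field_simp
  ring

lemma ord_am (n m : ℕ) [NeZero n] (hm : n = 2 * m) (hm1 : 1 ≤ m) :
    orderOf (QuaternionGroup.a (m : ZMod (2 * n)) : QuaternionGroup n) = 4 := by
  have h2 : (QuaternionGroup.a (m : ZMod (2 * n)) : QuaternionGroup n) ^ 2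
      = QuaternionGroup.a ((n : ℕ) : ZMod (2 * n)) := by
    rw [sq, QuaternionGroup.a_mul_a]
    congr 1
    push_cast [hm]
    ring
  have hne : ((n : ℕ) : ZMod (2 * n)) ≠ 0 := by
    haveI : NeZero (2 * n) := ⟨by have := NeZero.pos n; omega⟩
    rw [Ne, ZMod.natCast_eq_zero_iff]
    intro h
    have := Nat.le_of_dvd (NeZero.pos n) h
    omega
  change _ = 2 ^ 2
  haveI : Fact (Nat.Prime 2) := ⟨Nat.prime_two⟩
  apply orderOf_eq_prime_pow
  · rw [pow_one, h2]
    intro h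
    rw [QuaternionGroup.one_def] at h
    injection h with h'
    exact hne h'
  · show _ ^ 4 = 1
    rw [show (4 : ℕ) = 2 * 2 from rfl, pow_mul, h2, sq, QuaternionGroup.a_mul_a,
      QuaternionGroup.one_def]
    congr 1
    have : ((n : ZMod (2 * n)) + n) = ((2 * n : ℕ) : ZMod (2 * n)) := by push_cast; ring
    rw [this, ZMod.natCast_self]

lemma super_top (n m : ℕ) [NeZero n] (hm : n = 2 * m) (hm1 : 1 ≤ m) :
    superGraph (commutingGraph (QuaternionGroup n)) (orderRel (QuaternionGroup n))
      (orderRel_equivalence (QuaternionGroup n)) = ⊤ := by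
  set k : QuaternionGroup n := QuaternionGroup.a ((m : ZMod (2 * n))) with hk
  have hok : orderOf k = 4 := ord_am n m hm hm1
  ext x y
  rw [SimpleGraph.top_adj]
  constructor
  · exact fun h => h.1
  · intro hxy
    refine ⟨hxy, ?_⟩
    obtain (i | i) := x <;> obtain (j | j) := y
    · right
      exact ⟨QuaternionGroup.a i, QuaternionGroup.a j, rfl, rfl, hxy,
        by simp [add_comm]⟩
    · by_cases h4 : orderOf (QuaternionGroup.a i) = 4
      · left
        exact h4.trans (QuaternionGroup.orderOf_xa j).symm
      · right
        refine ⟨QuaternionGroup.a i, k, rfl, (QuaternionGroup.orderOf_xa j).trans hok.symm,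
          ?_, by simp [hk, add_comm]⟩
        intro h
        exact h4 (h ▸ hok)
    · by_cases h4 : orderOf (QuaternionGroup.a j) = 4
      · left
        exact (QuaternionGroup.orderOf_xa i).trans h4.symm
      · right
        refine ⟨k, QuaternionGroup.a j, (QuaternionGroup.orderOf_xa i).trans hok.symm, rfl,
          ?_, by simp [hk, add_comm]⟩
        intro h
        exact h4 (h.symm ▸ hok)
    · left
      exact (QuaternionGroup.orderOf_xa i).trans (QuaternionGroup.orderOf_xa j).symm

theorem stmt9 (n : ℕ) [NeZero n] (hn : 2 ≤ n) (heven : Even n) :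
    somborCharpoly (superGraph (commutingGraph (QuaternionGroup n))
        (orderRel (QuaternionGroup n)) (orderRel_equivalence (QuaternionGroup n))) =
      (X + C ((4 * (n : ℝ) - 1) * rt2)) ^ (4 * n - 1) *
        (X - C ((4 * (n : ℝ) - 1) ^ 2 * rt2)) := by
  obtain ⟨m, hm'⟩ := heven
  have hm : n = 2 * m := by omega
  have hm1 : 1 ≤ m := by omega
  rw [super_top n m hm hm1]
  have hcard : Fintype.card (QuaternionGroup n) = 4 * n := QuaternionGroup.card
  have hmat : somborMatrix (⊤ : SimpleGraph (QuaternionGroup n))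
      = Matrix.of (fun u v => if u = v then 0
          else (((Fintype.card (QuaternionGroup n) - 1 : ℕ) : ℝ) * rt2)) := by
    ext u v
    simp only [somborMatrix, Matrix.of_apply, SimpleGraph.top_adj]
    by_cases h : u = v
    · simp [h]
    · rw [if_pos h, if_neg h, sdeg_top, sdeg_top]
      set a : ℝ := ((Fintype.card (QuaternionGroup n) - 1 : ℕ) : ℝ) with ha'
      have ha : 0 ≤ a := Nat.cast_nonneg _
      rw [show a ^ 2 + a ^ 2 = 2 * a ^ 2 by ring, Real.sqrt_mul (by norm_num),
        Real.sqrt_sq ha, rt2, mul_comm]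
  rw [somborCharpoly, hmat, charpoly_const_offdiag, hcard]
  have h1 : 1 ≤ 4 * n := by omega
  have hc : ((4 * n - 1 : ℕ) : ℝ) = 4 * (n : ℝ) - 1 := by
    push_cast [Nat.cast_sub h1]
    ring
  rw [hc]
  ring
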